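/- Consider a two-player game setting: strategy sets S_1 = {1,…,k_1} and S_2 = {1,…,k_2} with k_1, k_2 ≥ 2, and positive weights w_1 : S_2 → ℝ_{>0}, w_2 : S_1 → ℝ_{>0}. For each pair (i_1, i_2) with 2 ≤ i_1 ≤ k_1 and 2 ≤ i_2 ≤ k_2, define the game x_{i_1,i_2} = (c_1, c_2) by c_1(x_1,x_2) = (1/w_1(x_2))·(1{x_1=1} − 1{x_1=i_1})·(1{x_2=1} − 1{x_2=i_2}) and c_2(x_1,x_2) = −(1/w_2(x_1))·(1{x_1=1} − 1{x_1=i_1})·(1{x_2=1} − 1{x_2=i_2}), where 1{·} denotes the indicator. Then these (k_1−1)(k_2−1) games are linearly independent and form a basis of the coset weighted pure harmonic subspace ℋ^{cw}, i.e. the orthogonal complement in 𝒢 of the subspace of coset weighted potential games with respect to (w_1,w_2). -/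

import Mathlib

/-- The space of two-player games with strategy sets `Fin k₁`, `Fin k₂`:
a pair of payoff functions `(c₁, c₂)`. -/
abbrev TwoGame (k₁ k₂ : ℕ) := (Fin k₁ → Fin k₂ → ℝ) × (Fin k₁ → Fin k₂ → ℝ)

/-- `(c₁, c₂)` is a coset weighted potential game with respect to the positive
weights `w₁ : S₂ → ℝ`, `w₂ : S₁ → ℝ`. -/
def IsCWPG2 {k₁ k₂ : ℕ} (w₁ : Fin k₂ → ℝ) (w₂ : Fin k₁ → ℝ) (c : TwoGame k₁ k₂) : Prop :=
  ∃ P : Fin k₁ → Fin k₂ → ℝ,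
    (∀ (s₂ : Fin k₂) (x y : Fin k₁), c.1 x s₂ - c.1 y s₂ = w₁ s₂ * (P x s₂ - P y s₂)) ∧
    (∀ (s₁ : Fin k₁) (x y : Fin k₂), c.2 s₁ x - c.2 s₁ y = w₂ s₁ * (P s₁ x - P s₁ y))

/-- The inner product `⟨c, c'⟩ = Σ_{i=1}^2 Σ_{s∈S} c_i(s) c'_i(s)`. -/
noncomputable def twoGameInner {k₁ k₂ : ℕ} (c c' : TwoGame k₁ k₂) : ℝ :=
  (∑ s₁ : Fin k₁, ∑ s₂ : Fin k₂, c.1 s₁ s₂ * c'.1 s₁ s₂) +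
  (∑ s₁ : Fin k₁, ∑ s₂ : Fin k₂, c.2 s₁ s₂ * c'.2 s₁ s₂)

/-- The game `x_{i₁,i₂}` of Section 3.3 (here `0`-indexed: the paper's strategy `1`
is index `0` and the paper's indices `i₁, i₂ ∈ {2,…,k}` are the nonzero indices):
`c₁(x₁,x₂) = (1/w₁(x₂))·(1{x₁=1} − 1{x₁=i₁})·(1{x₂=1} − 1{x₂=i₂})` and
`c₂(x₁,x₂) = −(1/w₂(x₁))·(1{x₁=1} − 1{x₁=i₁})·(1{x₂=1} − 1{x₂=i₂})`. -/
noncomputable def harmonicBasisGame {k₁ k₂ : ℕ} (hk₁ : 2 ≤ k₁) (hk₂ : 2 ≤ k₂)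
    (w₁ : Fin k₂ → ℝ) (w₂ : Fin k₁ → ℝ) (i₁ : Fin k₁) (i₂ : Fin k₂) :
    TwoGame k₁ k₂ :=
  (fun x₁ x₂ => (1 / w₁ x₂) *
      ((if x₁ = (⟨0, by omega⟩ : Fin k₁) then 1 else 0) - (if x₁ = i₁ then 1 else 0)) *
      ((if x₂ = (⟨0, by omega⟩ : Fin k₂) then 1 else 0) - (if x₂ = i₂ then 1 else 0)),
   fun x₁ x₂ => -(1 / w₂ x₁) *
      ((if x₁ = (⟨0, by omega⟩ : Fin k₁) then 1 else 0) - (if x₁ = i₁ then 1 else 0)) *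
      ((if x₂ = (⟨0, by omega⟩ : Fin k₂) then 1 else 0) - (if x₂ = i₂ then 1 else 0)))


section AuxHarmonic

open Finset

private lemma aux_sum_delta2 {n m : ℕ} (a a' : Fin n) (b b' : Fin m) (F : Fin n → Fin m → ℝ) :
    ∑ x : Fin n, ∑ y : Fin m,
      ((if x = a then (1:ℝ) else 0) - (if x = a' then 1 else 0)) *
      (((if y = b then (1:ℝ) else 0) - (if y = b' then 1 else 0)) * F x y)
    = F a b - F a' b - (F a b' - F a' b') := by
  simp [sub_mul, mul_sub, Finset.sum_sub_distrib, ite_mul, one_mul, zero_mul,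
    Finset.sum_ite_eq']

private lemma aux_sum_point {n m : ℕ} (a : Fin n) (b : Fin m) (F : Fin n → Fin m → ℝ) :
    ∑ x : Fin n, ∑ y : Fin m,
      F x y * ((if x = a then (1:ℝ) else 0) * (if y = b then 1 else 0)) = F a b := by
  simp [mul_ite, mul_one, mul_zero, Finset.sum_ite_eq']

private lemma aux_sum_compl_delta {n : ℕ} (z a : Fin n) (f : Fin n → ℝ) (hf : ∑ i, f i = 0) :
    ∑ i ∈ ({z}ᶜ : Finset (Fin n)),
      ((if a = z then (1:ℝ) else 0) - (if a = i then 1 else 0)) * f i = -f a := by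
  by_cases ha : a = z
  · subst ha
    have h1 : ∀ i ∈ ({a}ᶜ : Finset (Fin n)),
        ((if a = a then (1:ℝ) else 0) - (if a = i then 1 else 0)) * f i = f i := by
      intro i hi
      simp only [Finset.mem_compl, Finset.mem_singleton] at hi
      rw [if_pos rfl, if_neg (fun h => hi h.symm)]; ring
    rw [Finset.sum_congr rfl h1]
    have h2 := Finset.sum_compl_add_sum ({a} : Finset (Fin n)) f
    rw [Finset.sum_singleton] at h2
    linarith
  · have h1 : ∀ i ∈ ({z}ᶜ : Finset (Fin n)),
        ((if a = z then (1:ℝ) else 0) - (if a = i then 1 else 0)) * f i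
          = -(if a = i then f i else 0) := by
      intro i _
      rw [if_neg ha]
      by_cases h : a = i <;> simp [h]
    rw [Finset.sum_congr rfl h1, Finset.sum_neg_distrib, Finset.sum_ite_eq,
      if_pos (by simp [ha])]

private lemma aux_rep {k₁ k₂ : ℕ} (z₁ : Fin k₁) (z₂ : Fin k₂) (e : Fin k₁ → Fin k₂ → ℝ)
    (hrow : ∀ a, ∑ b, e a b = 0) (hcol : ∀ b, ∑ a, e a b = 0) (a : Fin k₁) (b : Fin k₂) :
    ∑ p : {i : Fin k₁ // i ≠ z₁} × {j : Fin k₂ // j ≠ z₂},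
      e p.1.1 p.2.1 *
        (((if a = z₁ then (1:ℝ) else 0) - (if a = p.1.1 then 1 else 0)) *
         ((if b = z₂ then (1:ℝ) else 0) - (if b = p.2.1 then 1 else 0))) = e a b := by
  rw [Fintype.sum_prod_type]
  have conv1 : ∀ (g : Fin k₁ → ℝ), ∑ i : {i : Fin k₁ // i ≠ z₁}, g i.1
      = ∑ i ∈ ({z₁}ᶜ : Finset (Fin k₁)), g i :=
    fun g => (Finset.sum_subtype ({z₁}ᶜ) (by simp) g).symm
  have conv2 : ∀ (g : Fin k₂ → ℝ), ∑ j : {j : Fin k₂ // j ≠ z₂}, g j.1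
      = ∑ j ∈ ({z₂}ᶜ : Finset (Fin k₂)), g j :=
    fun g => (Finset.sum_subtype ({z₂}ᶜ) (by simp) g).symm
  calc ∑ i : {i : Fin k₁ // i ≠ z₁}, ∑ j : {j : Fin k₂ // j ≠ z₂},
        e i.1 j.1 * (((if a = z₁ then (1:ℝ) else 0) - (if a = i.1 then 1 else 0)) *
         ((if b = z₂ then (1:ℝ) else 0) - (if b = j.1 then 1 else 0)))
      = ∑ i ∈ ({z₁}ᶜ : Finset (Fin k₁)),
          ((if a = z₁ then (1:ℝ) else 0) - (if a = i then 1 else 0)) *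
          (∑ j ∈ ({z₂}ᶜ : Finset (Fin k₂)),
            ((if b = z₂ then (1:ℝ) else 0) - (if b = j then 1 else 0)) * e i j) := by
        rw [conv1 (fun i => ∑ j : {j : Fin k₂ // j ≠ z₂},
          e i j.1 * (((if a = z₁ then (1:ℝ) else 0) - (if a = i then 1 else 0)) *
           ((if b = z₂ then (1:ℝ) else 0) - (if b = j.1 then 1 else 0))))]
        refine Finset.sum_congr rfl fun i _ => ?_
        rw [show (∑ j : {j : Fin k₂ // j ≠ z₂},
            e i j.1 * (((if a = z₁ then (1:ℝ) else 0) - (if a = i then 1 else 0)) *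
             ((if b = z₂ then (1:ℝ) else 0) - (if b = j.1 then 1 else 0))))
          = ∑ j : {j : Fin k₂ // j ≠ z₂},
          ((if a = z₁ then (1:ℝ) else 0) - (if a = i then 1 else 0)) *
          (((if b = z₂ then (1:ℝ) else 0) - (if b = j.1 then 1 else 0)) * e i j.1)
          from Finset.sum_congr rfl fun j _ => by ring,
          conv2 (fun j =>
          ((if a = z₁ then (1:ℝ) else 0) - (if a = i then 1 else 0)) *
          (((if b = z₂ then (1:ℝ) else 0) - (if b = j then 1 else 0)) * e i j)),
          Finset.mul_sum]
    _ = ∑ i ∈ ({z₁}ᶜ : Finset (Fin k₁)),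
          ((if a = z₁ then (1:ℝ) else 0) - (if a = i then 1 else 0)) * (fun i => -e i b) i := by
        refine Finset.sum_congr rfl fun i _ => ?_
        rw [aux_sum_compl_delta z₂ b (e i) (hrow i)]
    _ = -(fun i => -e i b) a := aux_sum_compl_delta z₁ a _ (by simp [hcol b])
    _ = e a b := by simp

/-- The canonical first strategy. -/
private abbrev zz1 {k : ℕ} (hk : 2 ≤ k) : Fin k := ⟨0, by omega⟩

private lemma aux_orth {k₁ k₂ : ℕ} (hk₁ : 2 ≤ k₁) (hk₂ : 2 ≤ k₂)
    (w₁ : Fin k₂ → ℝ) (w₂ : Fin k₁ → ℝ)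
    (hw₁ : ∀ s₂, w₁ s₂ ≠ 0) (hw₂ : ∀ s₁, w₂ s₁ ≠ 0) (i₁ : Fin k₁) (i₂ : Fin k₂)
    (c' : TwoGame k₁ k₂) (hc' : IsCWPG2 w₁ w₂ c') :
    twoGameInner (harmonicBasisGame hk₁ hk₂ w₁ w₂ i₁ i₂) c' = 0 := by
  obtain ⟨P, h1, h2⟩ := hc'
  have key : twoGameInner (harmonicBasisGame hk₁ hk₂ w₁ w₂ i₁ i₂) c'
      = (∑ x : Fin k₁, ∑ y : Fin k₂,
          ((if x = zz1 hk₁ then (1:ℝ) else 0) - (if x = i₁ then 1 else 0)) *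
          (((if y = zz1 hk₂ then (1:ℝ) else 0) - (if y = i₂ then 1 else 0)) *
            ((1 / w₁ y) * c'.1 x y)))
      + (∑ x : Fin k₁, ∑ y : Fin k₂,
          ((if x = zz1 hk₁ then (1:ℝ) else 0) - (if x = i₁ then 1 else 0)) *
          (((if y = zz1 hk₂ then (1:ℝ) else 0) - (if y = i₂ then 1 else 0)) *
            (-(1 / w₂ x) * c'.2 x y))) := by
    have hg : harmonicBasisGame hk₁ hk₂ w₁ w₂ i₁ i₂
        = (fun x₁ x₂ => (1 / w₁ x₂) *
            ((if x₁ = zz1 hk₁ then (1:ℝ) else 0) - (if x₁ = i₁ then 1 else 0)) *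
            ((if x₂ = zz1 hk₂ then (1:ℝ) else 0) - (if x₂ = i₂ then 1 else 0)),
           fun x₁ x₂ => -(1 / w₂ x₁) *
            ((if x₁ = zz1 hk₁ then (1:ℝ) else 0) - (if x₁ = i₁ then 1 else 0)) *
            ((if x₂ = zz1 hk₂ then (1:ℝ) else 0) - (if x₂ = i₂ then 1 else 0))) := rfl
    rw [hg]
    unfold twoGameInner
    exact congrArg₂ (· + ·)
      (Finset.sum_congr rfl fun x _ => Finset.sum_congr rfl fun y _ => by ring)
      (Finset.sum_congr rfl fun x _ => Finset.sum_congr rfl fun y _ => by ring)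
  rw [key, aux_sum_delta2, aux_sum_delta2]
  have A1 : (1 / w₁ (zz1 hk₂)) * c'.1 (zz1 hk₁) (zz1 hk₂) - (1 / w₁ (zz1 hk₂)) * c'.1 i₁ (zz1 hk₂)
      = P (zz1 hk₁) (zz1 hk₂) - P i₁ (zz1 hk₂) := by
    rw [← mul_sub, h1 (zz1 hk₂) (zz1 hk₁) i₁, one_div, inv_mul_cancel_left₀ (hw₁ _)]
  have A2 : (1 / w₁ i₂) * c'.1 (zz1 hk₁) i₂ - (1 / w₁ i₂) * c'.1 i₁ i₂
      = P (zz1 hk₁) i₂ - P i₁ i₂ := by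
    rw [← mul_sub, h1 i₂ (zz1 hk₁) i₁, one_div, inv_mul_cancel_left₀ (hw₁ _)]
  have B1 : (1 / w₂ (zz1 hk₁)) * c'.2 (zz1 hk₁) (zz1 hk₂) - (1 / w₂ (zz1 hk₁)) * c'.2 (zz1 hk₁) i₂
      = P (zz1 hk₁) (zz1 hk₂) - P (zz1 hk₁) i₂ := by
    rw [← mul_sub, h2 (zz1 hk₁) (zz1 hk₂) i₂, one_div, inv_mul_cancel_left₀ (hw₂ _)]
  have B2 : (1 / w₂ i₁) * c'.2 i₁ (zz1 hk₂) - (1 / w₂ i₁) * c'.2 i₁ i₂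
      = P i₁ (zz1 hk₂) - P i₁ i₂ := by
    rw [← mul_sub, h2 i₁ (zz1 hk₂) i₂, one_div, inv_mul_cancel_left₀ (hw₂ _)]
  linear_combination A1 - A2 - B1 + B2

end AuxHarmonic

/-- **Basis of `ℋ^{cw}` for two players (Section 3.3).** The `(k₁−1)(k₂−1)` games
`x_{i₁,i₂}` (for `i₁, i₂` ranging over the nonzero strategies, i.e. the paper's
`2 ≤ i₁ ≤ k₁`, `2 ≤ i₂ ≤ k₂`) are linearly independent and span the coset weighted
pure harmonic subspace, i.e. the orthogonal complement of the subspace of coset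
weighted potential games with respect to `(w₁, w₂)`. -/
theorem two_player_harmonic_basis (k₁ k₂ : ℕ) (hk₁ : 2 ≤ k₁) (hk₂ : 2 ≤ k₂)
    (w₁ : Fin k₂ → ℝ) (w₂ : Fin k₁ → ℝ)
    (hw₁ : ∀ s₂, 0 < w₁ s₂) (hw₂ : ∀ s₁, 0 < w₂ s₁) :
    LinearIndependent ℝ
      (fun p : {i₁ : Fin k₁ // i₁ ≠ ⟨0, by omega⟩} × {i₂ : Fin k₂ // i₂ ≠ ⟨0, by omega⟩} =>
        harmonicBasisGame hk₁ hk₂ w₁ w₂ p.1.1 p.2.1) ∧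
    (∀ c : TwoGame k₁ k₂,
      c ∈ Submodule.span ℝ (Set.range
        (fun p : {i₁ : Fin k₁ // i₁ ≠ ⟨0, by omega⟩} × {i₂ : Fin k₂ // i₂ ≠ ⟨0, by omega⟩} =>
          harmonicBasisGame hk₁ hk₂ w₁ w₂ p.1.1 p.2.1)) ↔
      ∀ c' : TwoGame k₁ k₂, IsCWPG2 w₁ w₂ c' → twoGameInner c c' = 0) := by
  have hw₁' : ∀ s₂, w₁ s₂ ≠ 0 := fun s₂ => ne_of_gt (hw₁ s₂)
  have hw₂' : ∀ s₁, w₂ s₁ ≠ 0 := fun s₁ => ne_of_gt (hw₂ s₁)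
  constructor
  · -- linear independence
    rw [Fintype.linearIndependent_iff]
    intro g hg q
    have h : ∑ p : {i₁ : Fin k₁ // i₁ ≠ ⟨0, by omega⟩} × {i₂ : Fin k₂ // i₂ ≠ ⟨0, by omega⟩},
        g p * ((harmonicBasisGame hk₁ hk₂ w₁ w₂ p.1.1 p.2.1).1 q.1.1 q.2.1) = 0 := by
      have h0 := congrArg (fun c : TwoGame k₁ k₂ => c.1 q.1.1 q.2.1) hg
      simpa only [Prod.fst_sum, Finset.sum_apply, Prod.smul_fst, Pi.smul_apply,
        smul_eq_mul, Prod.fst_zero, Pi.zero_apply] using h0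
    have hv : ∀ p : {i₁ : Fin k₁ // i₁ ≠ ⟨0, by omega⟩} × {i₂ : Fin k₂ // i₂ ≠ ⟨0, by omega⟩},
        (harmonicBasisGame hk₁ hk₂ w₁ w₂ p.1.1 p.2.1).1 q.1.1 q.2.1
          = if p = q then 1 / w₁ q.2.1 else 0 := by
      intro p
      show (1 / w₁ q.2.1) *
          ((if q.1.1 = (⟨0, by omega⟩ : Fin k₁) then (1:ℝ) else 0) - (if q.1.1 = p.1.1 then 1 else 0)) *
          ((if q.2.1 = (⟨0, by omega⟩ : Fin k₂) then (1:ℝ) else 0) - (if q.2.1 = p.2.1 then 1 else 0)) = _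
      rw [if_neg q.1.2, if_neg q.2.2]
      by_cases hpq : p = q
      · subst hpq; rw [if_pos rfl, if_pos rfl, if_pos rfl]; ring
      · have hne : q.1.1 ≠ p.1.1 ∨ q.2.1 ≠ p.2.1 := by
          by_contra hcon; push_neg at hcon
          exact hpq (Prod.ext (Subtype.ext hcon.1.symm) (Subtype.ext hcon.2.symm))
        rw [if_neg hpq]
        rcases hne with h' | h'
        · rw [if_neg h']; ring
        · rw [if_neg h']; ring
    rw [Finset.sum_congr rfl (fun p _ => by rw [hv p])] at h
    simp only [mul_ite, mul_zero, Finset.sum_ite_eq', Finset.mem_univ, if_true] at h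
    have hq := hw₁' q.2.1
    field_simp at h
    simpa using h
  · intro c
    constructor
    · -- span ⊆ orthogonal complement
      intro hc c' hc'
      refine Submodule.span_induction (p := fun x _ => twoGameInner x c' = 0)
        ?_ ?_ ?_ ?_ hc
      · rintro x ⟨p, rfl⟩
        exact aux_orth hk₁ hk₂ w₁ w₂ hw₁' hw₂' p.1.1 p.2.1 c' hc'
      · simp [twoGameInner]
      · intro x y _ _ hx hy
        have hadd : twoGameInner (x + y) c' = twoGameInner x c' + twoGameInner y c' := by
          unfold twoGameInner
          simp only [Prod.fst_add, Prod.snd_add, Pi.add_apply, add_mul,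
            Finset.sum_add_distrib]
          ring
        rw [hadd, hx, hy, add_zero]
      · intro a x _ hx
        have hsmul : twoGameInner (a • x) c' = a * twoGameInner x c' := by
          unfold twoGameInner
          simp only [Prod.smul_fst, Prod.smul_snd, Pi.smul_apply, smul_eq_mul,
            Finset.mul_sum, mul_add, mul_assoc]
        rw [hsmul, hx, mul_zero]
    · -- orthogonal complement ⊆ span
      intro h
      -- pointwise relation
      have hrel : ∀ a b, c.1 a b * w₁ b + c.2 a b * w₂ a = 0 := by
        intro a b
        have h0 := h (fun x y => w₁ y * ((if x = a then (1:ℝ) else 0) * (if y = b then 1 else 0)),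
            fun x y => w₂ x * ((if x = a then (1:ℝ) else 0) * (if y = b then 1 else 0)))
          ⟨fun x y => (if x = a then (1:ℝ) else 0) * (if y = b then 1 else 0),
            fun s₂ x y => by dsimp only; ring, fun s₁ x y => by dsimp only; ring⟩
        have e1 : twoGameInner c
            (fun x y => w₁ y * ((if x = a then (1:ℝ) else 0) * (if y = b then 1 else 0)),
             fun x y => w₂ x * ((if x = a then (1:ℝ) else 0) * (if y = b then 1 else 0)))
            = c.1 a b * w₁ b + c.2 a b * w₂ a := by
          unfold twoGameInner
          rw [show (∑ x : Fin k₁, ∑ y : Fin k₂, c.1 x y *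
                (w₁ y * ((if x = a then (1:ℝ) else 0) * (if y = b then 1 else 0))))
              = ∑ x : Fin k₁, ∑ y : Fin k₂, (c.1 x y * w₁ y) *
                ((if x = a then (1:ℝ) else 0) * (if y = b then 1 else 0))
              from Finset.sum_congr rfl fun x _ => Finset.sum_congr rfl fun y _ => by ring,
            show (∑ x : Fin k₁, ∑ y : Fin k₂, c.2 x y *
                (w₂ x * ((if x = a then (1:ℝ) else 0) * (if y = b then 1 else 0))))
              = ∑ x : Fin k₁, ∑ y : Fin k₂, (c.2 x y * w₂ x) *
                ((if x = a then (1:ℝ) else 0) * (if y = b then 1 else 0))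
              from Finset.sum_congr rfl fun x _ => Finset.sum_congr rfl fun y _ => by ring,
            aux_sum_point, aux_sum_point]
        rw [e1] at h0
        exact h0
      -- column sums of c₁ vanish
      have hcol : ∀ b, ∑ x : Fin k₁, c.1 x b = 0 := by
        intro b
        have h0 := h (fun _ y => if y = b then (1:ℝ) else 0, fun _ _ => 0)
          ⟨fun _ _ => 0, fun s₂ x y => by dsimp only; ring, fun s₁ x y => by dsimp only; ring⟩
        simpa [twoGameInner, mul_ite, mul_one, mul_zero, Finset.sum_ite_eq'] using h0
      -- row sums of c₂ vanish
      have hrow2 : ∀ a, ∑ y : Fin k₂, c.2 a y = 0 := by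
        intro a
        have h0 := h (fun _ _ => 0, fun x _ => if x = a then (1:ℝ) else 0)
          ⟨fun _ _ => 0, fun s₂ x y => by dsimp only; ring, fun s₁ x y => by dsimp only; ring⟩
        have e2 : ∀ x, ∑ y : Fin k₂, c.2 x y * (if x = a then (1:ℝ) else 0)
            = (if x = a then (1:ℝ) else 0) * ∑ y : Fin k₂, c.2 x y := fun x => by
          rw [Finset.mul_sum]; exact Finset.sum_congr rfl fun y _ => by ring
        unfold twoGameInner at h0
        dsimp only at h0
        rw [Finset.sum_congr rfl (fun x _ => e2 x)] at h0
        simpa [ite_mul, one_mul, zero_mul, Finset.sum_ite_eq'] using h0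
      -- the harmonic matrix e
      have hrowe : ∀ a, ∑ b : Fin k₂, w₁ b * c.1 a b = 0 := by
        intro a
        calc ∑ b : Fin k₂, w₁ b * c.1 a b
            = ∑ b : Fin k₂, -(w₂ a * c.2 a b) :=
              Finset.sum_congr rfl fun b _ => by linarith [hrel a b]
          _ = -(w₂ a * ∑ b : Fin k₂, c.2 a b) := by
              rw [Finset.sum_neg_distrib, Finset.mul_sum]
          _ = 0 := by rw [hrow2 a]; ring
      have hcole : ∀ b, ∑ a : Fin k₁, w₁ b * c.1 a b = 0 := by
        intro b
        rw [← Finset.mul_sum, hcol b, mul_zero]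
      -- express c as a combination of the basis games
      have hce : c = ∑ p : {i₁ : Fin k₁ // i₁ ≠ ⟨0, by omega⟩} × {i₂ : Fin k₂ // i₂ ≠ ⟨0, by omega⟩},
          (w₁ p.2.1 * c.1 p.1.1 p.2.1) • harmonicBasisGame hk₁ hk₂ w₁ w₂ p.1.1 p.2.1 := by
        have hrep := fun (a : Fin k₁) (b : Fin k₂) =>
          aux_rep (⟨0, by omega⟩ : Fin k₁) (⟨0, by omega⟩ : Fin k₂)
            (fun a b => w₁ b * c.1 a b) hrowe hcole a b
        refine Prod.ext ?_ ?_
        · funext a b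
          rw [Prod.fst_sum]
          simp only [Finset.sum_apply, Prod.smul_fst, Pi.smul_apply, smul_eq_mul]
          rw [Finset.sum_congr rfl (fun p _ => show
              (w₁ p.2.1 * c.1 p.1.1 p.2.1) *
                ((1 / w₁ b) *
                  ((if a = (⟨0, by omega⟩ : Fin k₁) then (1:ℝ) else 0) - (if a = p.1.1 then 1 else 0)) *
                  ((if b = (⟨0, by omega⟩ : Fin k₂) then (1:ℝ) else 0) - (if b = p.2.1 then 1 else 0)))
              = (1 / w₁ b) * ((w₁ p.2.1 * c.1 p.1.1 p.2.1) *
                  (((if a = (⟨0, by omega⟩ : Fin k₁) then (1:ℝ) else 0) - (if a = p.1.1 then 1 else 0)) *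
                   ((if b = (⟨0, by omega⟩ : Fin k₂) then (1:ℝ) else 0) - (if b = p.2.1 then 1 else 0))))
              from by ring),
            ← Finset.mul_sum, hrep a b, one_div, inv_mul_cancel_left₀ (hw₁' b)]
        · funext a b
          rw [Prod.snd_sum]
          simp only [Finset.sum_apply, Prod.smul_snd, Pi.smul_apply, smul_eq_mul]
          rw [Finset.sum_congr rfl (fun p _ => show
              (w₁ p.2.1 * c.1 p.1.1 p.2.1) *
                (-(1 / w₂ a) *
                  ((if a = (⟨0, by omega⟩ : Fin k₁) then (1:ℝ) else 0) - (if a = p.1.1 then 1 else 0)) *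
                  ((if b = (⟨0, by omega⟩ : Fin k₂) then (1:ℝ) else 0) - (if b = p.2.1 then 1 else 0)))
              = -(1 / w₂ a) * ((w₁ p.2.1 * c.1 p.1.1 p.2.1) *
                  (((if a = (⟨0, by omega⟩ : Fin k₁) then (1:ℝ) else 0) - (if a = p.1.1 then 1 else 0)) *
                   ((if b = (⟨0, by omega⟩ : Fin k₂) then (1:ℝ) else 0) - (if b = p.2.1 then 1 else 0))))
              from by ring),
            ← Finset.mul_sum, hrep a b]
          apply mul_left_cancel₀ (hw₂' a)
          have hcancel : w₂ a * (-(1 / w₂ a) * (w₁ b * c.1 a b)) = -(w₁ b * c.1 a b) := by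
            field_simp
            rw [mul_assoc, mul_div_cancel_left₀ _ (hw₂' a)]
          rw [hcancel]
          linarith [hrel a b]
      rw [hce]
      exact Submodule.sum_mem _ fun p _ =>
        Submodule.smul_mem _ _ (Submodule.subset_span ⟨p, rfl⟩)
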